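/- If a monomial ideal I ⊂ S has linear quotients, then its squarefree part I* — the ideal generated by the squarefree monomials in the minimal generating set of I — also has linear quotients. Moreover, the restriction of an admissible order of G(I) to the squarefree generators is an admissible order of G(I*). -/

import Mathlib

attribute [local instance] Classical.propDecidable

abbrev Mon (n : ℕ) := Fin n →₀ ℕ

def mdeg {n : ℕ} (u : Mon n) : ℕ := u.sum fun _ e => e

/-- `mcolon u v` is the exponent vector of `u : v = u / gcd(u,v)`. -/
noncomputable def mcolon {n : ℕ} (u v : Mon n) : Mon n := u - v

def IsAdmissible {n : ℕ} (L : List (Mon n)) : Prop :=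
  ∀ i (hi : i < L.length), ∀ j (hj : j < i), ∃ k, ∃ hk : k < i,
    mdeg (mcolon (L[k]'(hk.trans hi)) (L[i]'hi)) = 1 ∧
    mcolon (L[k]'(hk.trans hi)) (L[i]'hi) ≤
      mcolon (L[j]'(hj.trans hi)) (L[i]'hi)

def LinearQuotientsSet {n : ℕ} (T : Set (Mon n)) : Prop :=
  ∃ L : List (Mon n), L.Nodup ∧ IsAdmissible L ∧ {u | u ∈ L} = T

def LinearQuotients {n : ℕ} (G : Finset (Mon n)) : Prop :=
  LinearQuotientsSet (↑G : Set (Mon n))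

/-- A monomial is squarefree if every variable occurs with exponent at most one. -/
def IsSqfree {n : ℕ} (u : Mon n) : Prop := ∀ i, u i ≤ 1

/-- If a monomial ideal `I` has linear quotients, then its squarefree part `I*` has
linear quotients; moreover the restriction of any admissible order of `G(I)` to the
squarefree generators is an admissible order of `G(I*)`. -/
lemma le_mdeg {n : ℕ} (u : Mon n) (s : Fin n) : u s ≤ mdeg u := by
  by_cases hs : u s = 0
  · simp [hs]
  · exact Finset.single_le_sum (fun _ _ => Nat.zero_le _) (Finsupp.mem_support_iff.mpr hs)

lemma filter_admissible {n : ℕ} (L : List (Mon n)) (hnd : L.Nodup) (hadm : IsAdmissible L) :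
    IsAdmissible (L.filter fun u => decide (IsSqfree u)) := by
  set L' := L.filter (fun u => decide (IsSqfree u)) with hL'
  have hsub : List.Sublist L' L := List.filter_sublist (l := L)
  obtain ⟨f, hf⟩ := List.sublist_iff_exists_fin_orderEmbedding_get_eq.mp hsub
  intro i hi j hj
  have hji : f ⟨j, hj.trans hi⟩ < f ⟨i, hi⟩ := f.strictMono (by exact hj)
  obtain ⟨k, hk, hdeg, hle⟩ := hadm (f ⟨i, hi⟩) (f ⟨i, hi⟩).2 (f ⟨j, hj.trans hi⟩) hji
  have hui : L'[i]'hi = L[(f ⟨i, hi⟩ : ℕ)]'(f ⟨i, hi⟩).2 := by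
    simpa [List.get_eq_getElem] using hf ⟨i, hi⟩
  have hvj : L'[j]'(hj.trans hi) = L[(f ⟨j, hj.trans hi⟩ : ℕ)]'(f ⟨j, hj.trans hi⟩).2 := by
    simpa [List.get_eq_getElem] using hf ⟨j, hj.trans hi⟩
  set u := L'[i]'hi with hu
  set v := L'[j]'(hj.trans hi) with hv
  set w := L[k]'(hk.trans (f ⟨i, hi⟩).2) with hw
  have husf : IsSqfree u := by
    have h1 : u ∈ L' := List.getElem_mem hi
    rw [hL', List.mem_filter] at h1
    simpa using h1.2
  have hvsf : IsSqfree v := by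
    have h1 : v ∈ L' := List.getElem_mem (hj.trans hi)
    rw [hL', List.mem_filter] at h1
    simpa using h1.2
  rw [← hui] at hdeg hle
  rw [← hvj] at hle
  -- w is squarefree
  have hwsf : IsSqfree w := by
    intro s
    by_cases hc : w s ≤ u s
    · exact hc.trans (husf s)
    · push_neg at hc
      have h1 : (mcolon w u) s = w s - u s := by
        simp [mcolon, Finsupp.tsub_apply]
      have h2 : (mcolon w u) s ≤ 1 := hdeg ▸ le_mdeg (mcolon w u) s
      have h3 : (mcolon w u) s = 1 := by omega
      have h4 : (mcolon v u) s ≥ 1 := h3 ▸ hle s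
      have h5 : (mcolon v u) s = v s - u s := by
        simp [mcolon, Finsupp.tsub_apply]
      have hv1 : v s ≤ 1 := hvsf s
      omega
  have hwmem : w ∈ L' := by
    rw [hL', List.mem_filter]
    exact ⟨List.getElem_mem _, by simpa using hwsf⟩
  obtain ⟨k', hk', hwk'⟩ := List.mem_iff_getElem.mp hwmem
  have hfk' : (f ⟨k', hk'⟩ : ℕ) = k := by
    have : L[(f ⟨k', hk'⟩ : ℕ)]'(f ⟨k', hk'⟩).2 = L[k]'(hk.trans (f ⟨i, hi⟩).2) := by
      rw [← hw]
      rw [← hwk']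
      simpa [List.get_eq_getElem] using (hf ⟨k', hk'⟩).symm
    exact (List.Nodup.getElem_inj_iff hnd).mp this
  have hk'i : k' < i := by
    have : f ⟨k', hk'⟩ < f ⟨i, hi⟩ := by
      rw [Fin.lt_iff_val_lt_val, hfk']; exact hk
    exact f.lt_iff_lt.mp this
  refine ⟨k', hk'i, ?_, ?_⟩
  · rw [show L'[k']'(hk'i.trans hi) = w from hwk']; exact hdeg
  · rw [show L'[k']'(hk'i.trans hi) = w from hwk']; exact hle

theorem squarefree_part_linearQuotients {n : ℕ} (G : Finset (Mon n))
    (h : LinearQuotients G) :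
    LinearQuotientsSet {u | u ∈ G ∧ IsSqfree u} ∧
    ∀ L : List (Mon n), L.Nodup → IsAdmissible L → {u | u ∈ L} = (↑G : Set (Mon n)) →
      IsAdmissible (L.filter fun u => decide (IsSqfree u)) := by
  constructor
  · obtain ⟨L, hnd, hadm, hset⟩ := h
    refine ⟨L.filter fun u => decide (IsSqfree u), hnd.filter _, filter_admissible L hnd hadm, ?_⟩
    ext x
    simp only [Set.mem_setOf_eq, List.mem_filter, decide_eq_true_iff]
    have hmem : ∀ x : Mon n, x ∈ L ↔ x ∈ G := fun x => by
      have := Set.ext_iff.mp hset x; simpa using this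
    exact and_congr_left (fun _ => hmem x)
  · intro L hnd hadm _
    exact filter_admissible L hnd hadm
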